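/- Suppose $\Gamma$ satisfies the Gaussian upper bound $0 < \Gamma(x,t;\xi,\tau) \leq C_1 (t-\tau)^{-n/2} e^{-|x-\xi|^2/(C_1(t-\tau))}$ for $t > \tau$. Then there exist constants $C \geq 1$ and $0 < \delta_1 < 1$, depending only on $C_1$ and $n$, such that for every $x_0 \in \mathbb{R}^n$, $t_0 > \tau$, and $\xi \in \mathbb{R}^n$, setting $\rho = \delta_1 [|x_0 - \xi|^2 + (t_0 - \tau)]^{1/2}$, one has $$\int_{t_0 - \rho^2}^{t_0} \int_{B_\rho(x_0)} |\Gamma(x, t; \xi, \tau)|^2 \, dx \, dt \leq C \frac{\rho^n}{(t_0 - \tau)^{n-1}} e^{-\frac{|x_0 - \xi|^2}{C(t_0 - \tau)}}.$$ -/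

import Mathlib

open Real MeasureTheory

lemma helper1 (c x : ℝ) (hc : 0 < c) (hx : 0 ≤ x) : x * Real.exp (-(x/c)) ≤ c := by
  have h1 : x/c ≤ Real.exp (x/c) := by
    have := Real.add_one_le_exp (x/c); linarith
  have h2 : x ≤ c * Real.exp (x/c) := by
    have := mul_le_mul_of_nonneg_left h1 hc.le
    rw [mul_div_cancel₀] at this
    · exact this
    · exact hc.ne'
  have h3 : (0:ℝ) < Real.exp (-(x/c)) := Real.exp_pos _
  calc x * Real.exp (-(x/c)) ≤ (c * Real.exp (x/c)) * Real.exp (-(x/c)) :=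
        mul_le_mul_of_nonneg_right h2 h3.le
    _ = c := by rw [mul_assoc, ← Real.exp_add]; simp

lemma helper2 (n : ℕ) (b s : ℝ) (hb : 0 < b) (hs : 0 < s) :
    (s^n)⁻¹ * Real.exp (-(b/s)) ≤ (n.factorial : ℝ) / b^n := by
  have h : (b/s)^n / (n.factorial : ℝ) ≤ Real.exp (b/s) :=
    Real.pow_div_factorial_le_exp (b/s) (le_of_lt (div_pos hb hs)) n
  have hf : (0:ℝ) < (n.factorial : ℝ) := by exact_mod_cast n.factorial_pos
  have hbn : (0:ℝ) < b^n := pow_pos hb n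
  have hsn : (0:ℝ) < s^n := pow_pos hs n
  have hexp : (0:ℝ) < Real.exp (b/s) := Real.exp_pos _
  rw [Real.exp_neg]
  have key : b^n ≤ (n.factorial : ℝ) * Real.exp (b/s) * s^n := by
    rw [div_le_iff₀ hf, div_pow, div_le_iff₀ hsn] at h
    nlinarith
  have heq : (s^n)⁻¹ * (Real.exp (b/s))⁻¹ = 1/(s^n * Real.exp (b/s)) := by
    rw [one_div, mul_inv]
  rw [heq, div_le_div_iff₀ (by positivity) hbn]
  nlinarith

set_option maxHeartbeats 2000000 in
/-- `L²` bound on a parabolic cylinder for a kernel satisfying a Gaussian upper bound. -/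
theorem stmt4 (n : ℕ) (C1 : ℝ) (hC1 : 1 ≤ C1) :
    ∃ C : ℝ, 1 ≤ C ∧ ∃ δ1 : ℝ, 0 < δ1 ∧ δ1 < 1 ∧
      ∀ Γ : EuclideanSpace ℝ (Fin n) → ℝ → EuclideanSpace ℝ (Fin n) → ℝ → ℝ,
        (∀ x t ξ τ, τ < t → 0 < Γ x t ξ τ ∧
            Γ x t ξ τ ≤ C1 * (t - τ) ^ (-(n : ℝ) / 2) *
              Real.exp (-‖x - ξ‖ ^ 2 / (C1 * (t - τ)))) →
        (∀ x t ξ τ, t ≤ τ → Γ x t ξ τ = 0) →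
        ∀ (x0 ξ : EuclideanSpace ℝ (Fin n)) (t0 τ : ℝ), τ < t0 →
          (∫ t in Set.Ioo (t0 - (δ1 * Real.sqrt (‖x0 - ξ‖ ^ 2 + (t0 - τ))) ^ 2) t0,
              ∫ x in Metric.ball x0 (δ1 * Real.sqrt (‖x0 - ξ‖ ^ 2 + (t0 - τ))),
                (Γ x t ξ τ) ^ 2) ≤
            C * (δ1 * Real.sqrt (‖x0 - ξ‖ ^ 2 + (t0 - τ))) ^ (n : ℝ) /
                (t0 - τ) ^ ((n : ℝ) - 1) *
              Real.exp (-‖x0 - ξ‖ ^ 2 / (C * (t0 - τ))) := by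
  have hC1' : (0:ℝ) < C1 := lt_of_lt_of_le one_pos hC1
  set v : ℝ := (volume (Metric.ball (0 : EuclideanSpace ℝ (Fin n)) 1)).toReal with hvdef
  have hv0 : 0 ≤ v := ENNReal.toReal_nonneg
  set A : ℝ := Real.exp 1 * C1^2 * (n.factorial : ℝ) * (32*C1)^n with hAdef
  have hfac1 : (1:ℝ) ≤ (n.factorial : ℝ) := by exact_mod_cast n.factorial_pos
  have hA0 : 0 < A := by positivity
  set C : ℝ := 64*C1 + 65*C1*A*v with hCdef
  have hC0 : (0:ℝ) < C := by positivity
  have hCv : (0:ℝ) ≤ 65*C1*A*v := by positivity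
  have hC64 : 64*C1 ≤ C := by rw [hCdef]; linarith
  refine ⟨C, by rw [hCdef]; linarith, 1/2, by norm_num, by norm_num, ?_⟩
  intro Γ hub h0 x0 ξ t0 τ hτ
  set R : ℝ := ‖x0 - ξ‖ with hRdef
  have hR0 : 0 ≤ R := norm_nonneg _
  set D : ℝ := t0 - τ with hDdef
  have hD0 : 0 < D := sub_pos.mpr hτ
  set ρ : ℝ := 1/2 * Real.sqrt (R^2 + D) with hρdef
  have hS0 : (0:ℝ) < R^2 + D := by positivity
  have hρ0 : 0 < ρ := by rw [hρdef]; positivity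
  have hρ2 : ρ^2 = (R^2 + D)/4 := by
    rw [hρdef, mul_pow, Real.sq_sqrt hS0.le]; ring
  set u : ℝ := R^2 / D with hudef
  have hu0 : (0:ℝ) ≤ u := by positivity
  have hR2u : R^2 = u * D := by rw [hudef]; field_simp
  set M : ℝ := A * (D^n)⁻¹ * Real.exp (-(u/(32*C1))) with hMdef
  have hM0 : 0 < M := by positivity
  -- pointwise bound
  have key : ∀ t ∈ Set.Ioo (t0 - ρ^2) t0, ∀ x ∈ Metric.ball x0 ρ, (Γ x t ξ τ)^2 ≤ M := by
    intro t ht x hx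
    rcases le_or_gt t τ with htτ | htτ
    · rw [h0 x t ξ τ htτ]; simpa using hM0.le
    · obtain ⟨hpos, hbd⟩ := hub x t ξ τ htτ
      set s : ℝ := t - τ with hsdef
      have hs0 : 0 < s := sub_pos.mpr htτ
      have hsD : s < D := by rw [hsdef, hDdef]; exact sub_lt_sub_right ht.2 τ
      set q : ℝ := ‖x - ξ‖^2 with hqdef
      have hq0 : (0:ℝ) ≤ q := by rw [hqdef]; positivity
      have e1 : (s ^ (-(n:ℝ)/2))^2 = (s^n)⁻¹ := by
        rw [← Real.rpow_natCast (s ^ (-(n:ℝ)/2)) 2, ← Real.rpow_mul hs0.le]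
        norm_num
      have e2 : (Real.exp (-q/(C1*s)))^2 = Real.exp (-(2*q/(C1*s))) := by
        rw [pow_two, ← Real.exp_add]; congr 1; ring
      have hsq : (Γ x t ξ τ)^2 ≤ C1^2 * (s^n)⁻¹ * Real.exp (-(2*q/(C1*s))) := by
        calc (Γ x t ξ τ)^2 ≤ (C1 * s ^ (-(n:ℝ)/2) * Real.exp (-q/(C1*s)))^2 :=
              pow_le_pow_left₀ hpos.le hbd 2
          _ = C1^2 * (s^n)⁻¹ * Real.exp (-(2*q/(C1*s))) := by
              rw [mul_pow, mul_pow, e1, e2]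
      rcases le_or_gt u 1 with hcase | hcase
      · -- near case : R^2 ≤ D
        have hRD : R^2 ≤ D := by
          rw [hudef, div_le_one hD0] at hcase; exact hcase
        have hρ2D : ρ^2 ≤ D/2 := by rw [hρ2]; linarith
        have hsD2 : D/2 ≤ s := by
          have h1 := ht.1
          rw [hsdef, hDdef]; rw [hDdef] at hρ2D; linarith
        have h1 : (s^n)⁻¹ ≤ 2^n * (D^n)⁻¹ := by
          have h2 : (D/2)^n ≤ s^n := pow_le_pow_left₀ (by positivity) hsD2 n
          have h3 : (s^n)⁻¹ ≤ ((D/2)^n)⁻¹ :=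
            inv_anti₀ (by positivity) h2
          calc (s^n)⁻¹ ≤ ((D/2)^n)⁻¹ := h3
            _ = 2^n * (D^n)⁻¹ := by rw [div_pow]; field_simp
        have hexp1 : Real.exp (-(2*q/(C1*s))) ≤ 1 := by
          have h9 : -(2*q/(C1*s)) ≤ 0 := neg_nonpos.mpr (by positivity)
          calc Real.exp (-(2*q/(C1*s))) ≤ Real.exp 0 := Real.exp_le_exp.mpr h9
            _ = 1 := Real.exp_zero
        have hexp2 : Real.exp (-(1:ℝ)) ≤ Real.exp (-(u/(32*C1))) := by
          rw [Real.exp_le_exp]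
          have : u/(32*C1) ≤ 1 := by
            rw [div_le_one (by positivity)]; linarith
          linarith
        have h2n : (2:ℝ)^n ≤ (n.factorial:ℝ) * (32*C1)^n := by
          have h4 : (2:ℝ)^n ≤ (32*C1)^n :=
            pow_le_pow_left₀ (by norm_num) (by linarith) n
          calc (2:ℝ)^n ≤ (32*C1)^n := h4
            _ = 1 * (32*C1)^n := (one_mul _).symm
            _ ≤ (n.factorial:ℝ) * (32*C1)^n :=
                mul_le_mul_of_nonneg_right hfac1 (by positivity)
        have hexpinv : Real.exp 1 * Real.exp (-(1:ℝ)) = 1 := by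
          rw [← Real.exp_add]; norm_num
        calc (Γ x t ξ τ)^2 ≤ C1^2 * (s^n)⁻¹ * Real.exp (-(2*q/(C1*s))) := hsq
          _ ≤ C1^2 * (s^n)⁻¹ * 1 := by
              apply mul_le_mul_of_nonneg_left hexp1 (by positivity)
          _ = C1^2 * (s^n)⁻¹ := mul_one _
          _ ≤ C1^2 * (2^n * (D^n)⁻¹) := mul_le_mul_of_nonneg_left h1 (by positivity)
          _ = C1^2 * 2^n * (D^n)⁻¹ * (Real.exp 1 * Real.exp (-(1:ℝ))) := by
              rw [hexpinv]; ring
          _ ≤ C1^2 * ((n.factorial:ℝ) * (32*C1)^n) * (D^n)⁻¹ *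
                (Real.exp 1 * Real.exp (-(u/(32*C1)))) := by
              have hh1 : C1^2 * 2^n * (D^n)⁻¹ ≤
                  C1^2 * ((n.factorial:ℝ) * (32*C1)^n) * (D^n)⁻¹ :=
                mul_le_mul_of_nonneg_right
                  (mul_le_mul_of_nonneg_left h2n (by positivity)) (by positivity)
              have hh2 : Real.exp 1 * Real.exp (-(1:ℝ)) ≤
                  Real.exp 1 * Real.exp (-(u/(32*C1))) :=
                mul_le_mul_of_nonneg_left hexp2 (Real.exp_pos 1).le
              exact mul_le_mul hh1 hh2 (by positivity) (by positivity)
          _ = M := by rw [hMdef, hAdef]; ring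
      · -- far case : D < R^2
        have hDR : D < R^2 := by
          rw [hudef, lt_div_iff₀ hD0, one_mul] at hcase; exact hcase
        have hR2pos : (0:ℝ) < R^2 := lt_trans hD0 hDR
        have hρR : ρ ≤ 3/4 * R := by
          have h1 : ρ^2 ≤ (3/4*R)^2 := by
            have h9 : (3/4*R)^2 = 9/16*R^2 := by ring
            rw [hρ2, h9]; linarith [hDR, sq_nonneg R]
          calc ρ = Real.sqrt (ρ^2) := (Real.sqrt_sq hρ0.le).symm
            _ ≤ Real.sqrt ((3/4*R)^2) := Real.sqrt_le_sqrt h1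
            _ = 3/4*R := Real.sqrt_sq (by positivity)
        have hxR : R/4 ≤ ‖x - ξ‖ := by
          have h2 : dist x x0 < ρ := Metric.mem_ball.mp hx
          have h3 : dist x0 ξ ≤ dist x0 x + dist x ξ := dist_triangle x0 x ξ
          have h4 : dist x0 ξ = R := by rw [hRdef, dist_eq_norm]
          have h5 : dist x0 x = dist x x0 := dist_comm _ _
          have h6 : dist x ξ = ‖x - ξ‖ := dist_eq_norm x ξ
          linarith
        have hq16 : R^2/16 ≤ q := by
          rw [hqdef]
          calc R^2/16 = (R/4)^2 := by ring
            _ ≤ ‖x - ξ‖^2 := pow_le_pow_left₀ (by positivity) hxR 2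
        set b : ℝ := R^2/(16*C1) with hbdef
        have hb0 : 0 < b := by rw [hbdef]; positivity
        have hexp2 : Real.exp (-(2*q/(C1*s))) ≤ Real.exp (-(b/s)) * Real.exp (-(b/D)) := by
          rw [← Real.exp_add, Real.exp_le_exp]
          have e3 : b/D ≤ b/s := div_le_div_of_nonneg_left hb0.le hs0 hsD.le
          have e4a' : b*C1 ≤ q := by
            have : b*C1 = R^2/16 := by rw [hbdef]; field_simp
            rw [this]; exact hq16
          have e4 : 2*b/s ≤ 2*q/(C1*s) := by
            rw [div_le_div_iff₀ hs0 (by positivity)]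
            calc 2*b*(C1*s) = (b*C1)*(2*s) := by ring
              _ ≤ q*(2*s) := mul_le_mul_of_nonneg_right e4a' (by positivity)
              _ = 2*q*s := by ring
          have e5 : b/s + b/D ≤ 2*b/s := by
            have h9 : 2*b/s = b/s + b/s := by ring
            rw [h9]
            exact add_le_add_right e3 _
          have efin : b/s + b/D ≤ 2*q/(C1*s) := le_trans e5 e4
          calc -(2*q/(C1*s)) ≤ -(b/s + b/D) := neg_le_neg efin
            _ = -(b/s) + -(b/D) := by ring
        have h3 : (s^n)⁻¹ * Real.exp (-(b/s)) ≤ (n.factorial:ℝ)/b^n :=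
          helper2 n b s hb0 hs0
        have h4 : (n.factorial:ℝ)/b^n ≤ (n.factorial:ℝ)*(16*C1)^n * (D^n)⁻¹ := by
          have hbn : b^n = (R^2)^n / (16*C1)^n := by rw [hbdef, div_pow]
          rw [hbn, div_div_eq_mul_div, div_eq_mul_inv]
          apply mul_le_mul_of_nonneg_left _ (by positivity)
          exact inv_anti₀ (by positivity) (pow_le_pow_left₀ hD0.le hDR.le n)
        have h5 : Real.exp (-(b/D)) ≤ Real.exp (-(u/(32*C1))) := by
          rw [Real.exp_le_exp]
          have e6 : b/D = u/(16*C1) := by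
            rw [hbdef, hudef, div_div, div_div, mul_comm (16*C1) D]
          rw [e6]
          have : u/(32*C1) ≤ u/(16*C1) :=
            div_le_div_of_nonneg_left hu0 (by positivity) (by linarith)
          linarith
        have h6 : C1^2 * ((n.factorial:ℝ)*(16*C1)^n) ≤ A := by
          have h7 : ((16:ℝ)*C1)^n ≤ (32*C1)^n :=
            pow_le_pow_left₀ (by positivity) (by linarith) n
          have he1 : (1:ℝ) ≤ Real.exp 1 := by
            have := Real.add_one_le_exp (1:ℝ); linarith
          calc C1^2 * ((n.factorial:ℝ)*(16*C1)^n)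
              ≤ C1^2 * ((n.factorial:ℝ)*(32*C1)^n) := by
                apply mul_le_mul_of_nonneg_left _ (by positivity)
                exact mul_le_mul_of_nonneg_left h7 (by positivity)
            _ = 1 * (C1^2 * ((n.factorial:ℝ)*(32*C1)^n)) := (one_mul _).symm
            _ ≤ Real.exp 1 * (C1^2 * ((n.factorial:ℝ)*(32*C1)^n)) :=
                mul_le_mul_of_nonneg_right he1 (by positivity)
            _ = A := by rw [hAdef]; ring
        calc (Γ x t ξ τ)^2 ≤ C1^2 * (s^n)⁻¹ * Real.exp (-(2*q/(C1*s))) := hsq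
          _ ≤ C1^2 * (s^n)⁻¹ * (Real.exp (-(b/s)) * Real.exp (-(b/D))) :=
              mul_le_mul_of_nonneg_left hexp2 (by positivity)
          _ = C1^2 * ((s^n)⁻¹ * Real.exp (-(b/s))) * Real.exp (-(b/D)) := by ring
          _ ≤ C1^2 * ((n.factorial:ℝ)/b^n) * Real.exp (-(b/D)) := by
              apply mul_le_mul_of_nonneg_right _ (Real.exp_pos _).le
              exact mul_le_mul_of_nonneg_left h3 (by positivity)
          _ ≤ C1^2 * ((n.factorial:ℝ)*(16*C1)^n * (D^n)⁻¹) * Real.exp (-(u/(32*C1))) := by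
              apply mul_le_mul
              · exact mul_le_mul_of_nonneg_left h4 (by positivity)
              · exact h5
              · exact (Real.exp_pos _).le
              · positivity
          _ ≤ M := by
              rw [hMdef]
              apply mul_le_mul_of_nonneg_right _ (Real.exp_pos _).le
              calc C1^2 * ((n.factorial:ℝ)*(16*C1)^n * (D^n)⁻¹)
                  = C1^2 * ((n.factorial:ℝ)*(16*C1)^n) * (D^n)⁻¹ := by ring
                _ ≤ A * (D^n)⁻¹ := mul_le_mul_of_nonneg_right h6 (by positivity)
  -- volume of the ball
  have vol_ball_le : (volume (Metric.ball x0 ρ)).toReal ≤ v * ρ^n := by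
    rcases Nat.eq_zero_or_pos n with hn | hn
    · haveI : IsEmpty (Fin n) := by subst hn; infer_instance
      have hsub : Metric.ball x0 ρ ⊆ Metric.ball (0 : EuclideanSpace ℝ (Fin n)) 1 := by
        intro y _
        have hy : y = 0 := Subsingleton.elim y 0
        rw [Metric.mem_ball, hy]
        simpa using one_pos
      calc (volume (Metric.ball x0 ρ)).toReal
          ≤ (volume (Metric.ball (0 : EuclideanSpace ℝ (Fin n)) 1)).toReal :=
            ENNReal.toReal_mono measure_ball_lt_top.ne (measure_mono hsub)
        _ = v := rfl
        _ = v * ρ^n := by rw [hn, pow_zero, mul_one]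
    · haveI : Nonempty (Fin n) := ⟨⟨0, hn⟩⟩
      haveI : Nontrivial (EuclideanSpace ℝ (Fin n)) := inferInstance
      rw [Measure.addHaar_ball volume x0 hρ0.le, finrank_euclideanSpace_fin,
        ENNReal.toReal_mul, ENNReal.toReal_ofReal (by positivity)]
      exact le_of_eq (mul_comm _ _)
  have hIoo : (volume (Set.Ioo (t0 - ρ^2) t0)).toReal = ρ^2 := by
    rw [Real.volume_Ioo, sub_sub_cancel, ENNReal.toReal_ofReal (by positivity)]
  have inner_bd : ∀ t ∈ Set.Ioo (t0 - ρ^2) t0,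
      ‖∫ x in Metric.ball x0 ρ, (Γ x t ξ τ)^2‖ ≤ M * (v * ρ^n) := by
    intro t ht
    have h1 : ‖∫ x in Metric.ball x0 ρ, (Γ x t ξ τ)^2‖ ≤
        M * (volume (Metric.ball x0 ρ)).toReal :=
      norm_setIntegral_le_of_norm_le_const_ae' measure_ball_lt_top
        (Filter.Eventually.of_forall fun x hx => by
          rw [Real.norm_eq_abs, abs_of_nonneg (sq_nonneg _)]
          exact key t ht x hx)
    exact h1.trans (mul_le_mul_of_nonneg_left vol_ball_le hM0.le)
  have outer_bd : ‖∫ t in Set.Ioo (t0 - ρ^2) t0, ∫ x in Metric.ball x0 ρ, (Γ x t ξ τ)^2‖ ≤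
      M * (v * ρ^n) * ρ^2 := by
    have h1 := norm_setIntegral_le_of_norm_le_const_ae' (μ := volume)
      (f := fun t => ∫ x in Metric.ball x0 ρ, (Γ x t ξ τ)^2)
      (by rw [Real.volume_Ioo]; exact ENNReal.ofReal_lt_top)
      (Filter.Eventually.of_forall inner_bd)
    rwa [Measure.real, hIoo] at h1
  -- final arithmetic
  have he64 : Real.exp (-(u/(64*C1))) ≤ Real.exp (-(u/C)) := by
    rw [Real.exp_le_exp]
    have h9 : u/C ≤ u/(64*C1) := div_le_div_of_nonneg_left hu0 (by positivity) hC64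
    linarith
  have hexpsplit : Real.exp (-(u/(32*C1))) =
      Real.exp (-(u/(64*C1))) * Real.exp (-(u/(64*C1))) := by
    rw [← Real.exp_add]
    congr 1
    have h9 : u/(64*C1) + u/(64*C1) = u/(32*C1) := by
      rw [← add_div, show u + u = 2*u from by ring,
        show (64:ℝ)*C1 = 2*(32*C1) from by ring,
        mul_div_mul_left u (32*C1) (by norm_num : (2:ℝ) ≠ 0)]
    linarith
  have hue : (u+1) * Real.exp (-(u/(64*C1))) ≤ 65*C1 := by
    have h9 := helper1 (64*C1) u (by positivity) hu0
    have h10 : Real.exp (-(u/(64*C1))) ≤ 1 := by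
      calc Real.exp (-(u/(64*C1))) ≤ Real.exp 0 :=
            Real.exp_le_exp.mpr (neg_nonpos.mpr (by positivity))
        _ = 1 := Real.exp_zero
    calc (u+1) * Real.exp (-(u/(64*C1)))
        = u * Real.exp (-(u/(64*C1))) + Real.exp (-(u/(64*C1))) := by ring
      _ ≤ 64*C1 + 1 := add_le_add h9 h10
      _ ≤ 65*C1 := by linarith
  have hρ2' : ρ^2 = (u*D+D)/4 := by rw [hρ2, hR2u]
  have final : M * (v * ρ^n) * ρ^2 ≤ C * ρ^n * D / D^n * Real.exp (-(u/C)) := by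
    calc M * (v * ρ^n) * ρ^2
        = (A*v/4 * ((u+1) * Real.exp (-(u/(64*C1)))) * Real.exp (-(u/(64*C1)))) *
            (ρ^n * D * (D^n)⁻¹) := by
          rw [hMdef, hρ2', hexpsplit]; ring
      _ ≤ (A*v/4 * (65*C1) * Real.exp (-(u/C))) * (ρ^n * D * (D^n)⁻¹) := by
          apply mul_le_mul_of_nonneg_right _ (by positivity)
          exact mul_le_mul (mul_le_mul_of_nonneg_left hue (by positivity)) he64
            (Real.exp_pos _).le (by positivity)
      _ ≤ (C * Real.exp (-(u/C))) * (ρ^n * D * (D^n)⁻¹) := by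
          apply mul_le_mul_of_nonneg_right _ (by positivity)
          apply mul_le_mul_of_nonneg_right _ (Real.exp_pos _).le
          have h9 : (0:ℝ) ≤ 64*C1 := by positivity
          rw [hCdef]
          linarith [hCv]
      _ = C * ρ^n * D / D^n * Real.exp (-(u/C)) := by
          rw [div_eq_mul_inv]; ring
  have habs : (∫ t in Set.Ioo (t0 - ρ^2) t0, ∫ x in Metric.ball x0 ρ, (Γ x t ξ τ)^2) ≤
      M * (v * ρ^n) * ρ^2 := by
    refine le_trans (le_abs_self _) ?_
    rw [← Real.norm_eq_abs]
    exact outer_bd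
  refine le_trans habs ?_
  have hgoal3 : -R^2/(C*D) = -(u/C) := by
    rw [hudef, div_div, mul_comm D C, neg_div]
  rw [Real.rpow_natCast, Real.rpow_sub hD0, Real.rpow_one, Real.rpow_natCast,
    hgoal3, div_div_eq_mul_div]
  exact final
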